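/- Let {π^i_j : B_i → B_{ij}}_{i≠j∈J} be a finite family of surjective algebra homomorphisms whose kernels generate a distributive lattice of ideals. If the family satisfies the cocycle condition, then for every index i the canonical projection from the multi-pullback algebra B^π to B_i is surjective. -/

import Mathlib

open Function

/-- A set of ideals *generates a distributive lattice* iff it is contained in a
distributive sublattice of the lattice of ideals. -/
def GeneratesDistribLattice {A : Type*} [CommRing A] (s : Set (Ideal A)) : Prop :=
  ∃ L : Sublattice (Ideal A), (∀ I ∈ s, I ∈ L) ∧
    ∀ x ∈ L, ∀ y ∈ L, ∀ z ∈ L, x ⊓ (y ⊔ z) = (x ⊓ y) ⊔ (x ⊓ z)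

variable {J : Type*}

/-- Compatibility of `b i` and `b j`: `π^i_j (b i) = π^j_i (b j)`, where the
identification `B_{ij} = B_{ji}` is witnessed by the ring isomorphisms `e`. -/
def Compat (B : J → Type*) [∀ i, CommRing (B i)] (C : J → J → Type*)
    [∀ i j, CommRing (C i j)] (π : ∀ i j, B i →+* C i j)
    (e : ∀ i j, C i j ≃+* C j i) (i j : J) (bi : B i) (bj : B j) : Prop :=
  π i j bi = e j i (π j i bj)

/-- A *distributive family*: all the homomorphisms `π^i_j` are surjective and, for each
`i`, the kernels `ker π^i_j` generate a distributive lattice of ideals of `B i`. -/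
def DistribFamily (B : J → Type*) [∀ i, CommRing (B i)] (C : J → J → Type*)
    [∀ i j, CommRing (C i j)] (π : ∀ i j, B i →+* C i j) : Prop :=
  (∀ i j, i ≠ j → Surjective (π i j)) ∧
  ∀ i : J, GeneratesDistribLattice {I : Ideal (B i) | ∃ j, j ≠ i ∧ I = RingHom.ker (π i j)}

/-- The first cocycle condition: `π^i_j (ker π^i_k) = π^j_i (ker π^j_k)` for all
distinct `i, j, k` (the right-hand side is transported to `C i j` by `e`). -/
def Cocycle1 (B : J → Type*) [∀ i, CommRing (B i)] (C : J → J → Type*)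
    [∀ i j, CommRing (C i j)] (π : ∀ i j, B i →+* C i j)
    (e : ∀ i j, C i j ≃+* C j i) : Prop :=
  ∀ i j k : J, i ≠ j → i ≠ k → j ≠ k →
    Ideal.map (π i j) (RingHom.ker (π i k)) =
      Ideal.map ((e j i).toRingHom.comp (π j i)) (RingHom.ker (π j k))

/-- The second cocycle condition `φ^{ik}_j = φ^{ij}_k ∘ φ^{jk}_i`, expressed elementwise
via the characterization
`φ^{ij}_k ([b_j]^j_{ik}) = [b_i]^i_{jk} ↔ π^i_j(b_i) - π^j_i(b_j) ∈ π^i_j(ker π^i_k)`. -/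
def Cocycle2 (B : J → Type*) [∀ i, CommRing (B i)] (C : J → J → Type*)
    [∀ i j, CommRing (C i j)] (π : ∀ i j, B i →+* C i j)
    (e : ∀ i j, C i j ≃+* C j i) : Prop :=
  ∀ i j k : J, i ≠ j → i ≠ k → j ≠ k → ∀ (bi : B i) (bj : B j) (bk : B k),
    π j k bj - e k j (π k j bk) ∈ Ideal.map (π j k) (RingHom.ker (π j i)) →
    π i j bi - e j i (π j i bj) ∈ Ideal.map (π i j) (RingHom.ker (π i k)) →
    π i k bi - e k i (π k i bk) ∈ Ideal.map (π i k) (RingHom.ker (π i j))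

/-- The cocycle condition of Calow–Matthes. -/
def CocycleCondition (B : J → Type*) [∀ i, CommRing (B i)] (C : J → J → Type*)
    [∀ i j, CommRing (C i j)] (π : ∀ i j, B i →+* C i j)
    (e : ∀ i j, C i j ≃+* C j i) : Prop :=
  Cocycle1 B C π e ∧ Cocycle2 B C π e

/-- The two-element extension property: every compatible pair `(b_i, b_j)` extends by
some `b_k` compatible with both. -/
def ExtendsPairs (B : J → Type*) [∀ i, CommRing (B i)] (C : J → J → Type*)
    [∀ i j, CommRing (C i j)] (π : ∀ i j, B i →+* C i j)
    (e : ∀ i j, C i j ≃+* C j i) : Prop :=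
  ∀ i j k : J, i ≠ j → i ≠ k → j ≠ k → ∀ (bi : B i) (bj : B j),
    Compat B C π e i j bi bj →
    ∃ bk : B k, Compat B C π e i k bi bk ∧ Compat B C π e j k bj bk


open Function

section Aux

variable {α : Type*} [Lattice α] (L : Sublattice α)

lemma dual_distrib
    (hL : ∀ x ∈ L, ∀ y ∈ L, ∀ z ∈ L, x ⊓ (y ⊔ z) = (x ⊓ y) ⊔ (x ⊓ z)) :
    ∀ x ∈ L, ∀ y ∈ L, ∀ z ∈ L, x ⊔ (y ⊓ z) = (x ⊔ y) ⊓ (x ⊔ z) := by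
  intro x hx y hy z hz
  have h1 : (x ⊔ y) ⊓ (x ⊔ z) = ((x ⊔ y) ⊓ x) ⊔ ((x ⊔ y) ⊓ z) :=
    hL _ (L.supClosed hx hy) _ hx _ hz
  have h2 : (x ⊔ y) ⊓ x = x := inf_eq_right.2 le_sup_left
  have h3 : (x ⊔ y) ⊓ z = z ⊓ (x ⊔ y) := inf_comm _ _
  have h4 : z ⊓ (x ⊔ y) = (z ⊓ x) ⊔ (z ⊓ y) := hL _ hz _ hx _ hy
  rw [h1, h2, h3, h4, ← sup_assoc]
  have h5 : x ⊔ (z ⊓ x) = x := sup_eq_left.2 inf_le_right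
  rw [h5, inf_comm z y]

end Aux

lemma inf_mem_and_sup_distrib {A : Type*} [CommRing A] (L : Sublattice (Ideal A))
    (hL : ∀ x ∈ L, ∀ y ∈ L, ∀ z ∈ L, x ⊓ (y ⊔ z) = (x ⊓ y) ⊔ (x ⊓ z))
    {ι : Type*} (K : Ideal A) (hK : K ∈ L) :
    ∀ (s : Finset ι), s.Nonempty → ∀ (I : ι → Ideal A), (∀ l ∈ s, I l ∈ L) →
      s.inf I ∈ L ∧ s.inf (fun l => I l ⊔ K) = s.inf I ⊔ K := by
  intro s hs
  induction hs using Finset.Nonempty.cons_induction with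
  | singleton a => intro I hI; simp [hI a (by simp)]
  | cons a s ha hs ih =>
      intro I hI
      have hIa : I a ∈ L := hI a (by simp)
      have ihs := ih I (fun l hl => hI l (by simp [hl]))
      constructor
      · rw [Finset.inf_cons]; exact L.infClosed hIa ihs.1
      · rw [Finset.inf_cons, Finset.inf_cons, ihs.2]
        have := dual_distrib L hL K hK (I a) hIa (s.inf I) ihs.1
        rw [sup_comm (s.inf I) K, sup_comm (I a) K, sup_comm _ K, ← this]

lemma crt {A : Type*} [CommRing A] (L : Sublattice (Ideal A))
    (hL : ∀ x ∈ L, ∀ y ∈ L, ∀ z ∈ L, x ⊓ (y ⊔ z) = (x ⊓ y) ⊔ (x ⊓ z))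
    {ι : Type*} (s : Finset ι) (I : ι → Ideal A) (c : ι → A)
    (hmem : ∀ l ∈ s, I l ∈ L)
    (hpair : ∀ l ∈ s, ∀ m ∈ s, c l - c m ∈ I l ⊔ I m) :
    ∃ x : A, ∀ l ∈ s, x - c l ∈ I l := by
  induction s using Finset.cons_induction with
  | empty => exact ⟨0, by simp⟩
  | cons n s hn ih =>
      obtain ⟨x, hx⟩ := ih (fun l hl => hmem l (by simp [hl]))
        (fun l hl m hm => hpair l (by simp [hl]) m (by simp [hm]))
      rcases s.eq_empty_or_nonempty with rfl | hne
      · exact ⟨c n, by simp⟩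
      · have hmem' : ∀ l ∈ s, I l ∈ L := fun l hl => hmem l (by simp [hl])
        have hKn : I n ∈ L := hmem n (by simp)
        obtain ⟨hinfL, hdistr⟩ :=
          inf_mem_and_sup_distrib L hL (I n) hKn s hne I hmem'
        have hxn : x - c n ∈ s.inf I ⊔ I n := by
          rw [← hdistr, Submodule.mem_finsetInf]
          intro l hl
          have h1 : x - c l ∈ I l ⊔ I n := Ideal.mem_sup_left (hx l hl)
          have h2 : c l - c n ∈ I l ⊔ I n :=
            hpair l (by simp [hl]) n (by simp)
          have := add_mem h1 h2
          simpa using this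
        rw [Submodule.mem_sup] at hxn
        obtain ⟨v, hv, w, hw, hvw⟩ := hxn
        refine ⟨x - v, fun l hl => ?_⟩
        rcases Finset.mem_cons.1 hl with rfl | hl'
        · have : x - v - c l = w := by linear_combination -hvw
          rw [this]; exact hw
        · have hvl : v ∈ I l := (Submodule.mem_finsetInf.1 hv) l hl'
          have : x - v - c l = (x - c l) - v := by ring
          rw [this]; exact sub_mem (hx l hl') hvl


lemma extend_step (B : J → Type*) [∀ i, CommRing (B i)] (C : J → J → Type*)
    [∀ i j, CommRing (C i j)] (π : ∀ i j, B i →+* C i j) (e : ∀ i j, C i j ≃+* C j i)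
    (he : ∀ i j, e j i = (e i j).symm)
    (hdist : DistribFamily B C π) (hcoc2 : Cocycle2 B C π e)
    (S : Finset J) (k : J) (hk : k ∉ S) (b : ∀ l, B l)
    (hb : ∀ l ∈ S, ∀ m ∈ S, l ≠ m → Compat B C π e l m (b l) (b m)) :
    ∃ bk : B k, ∀ l ∈ S, Compat B C π e l k (b l) bk ∧ Compat B C π e k l bk (b l) := by
  classical
  obtain ⟨hsurj, hgen⟩ := hdist
  obtain ⟨L, hLmem, hLdist⟩ := hgen k
  set I : J → Ideal (B k) := fun l => RingHom.ker (π k l) with hI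
  have c : ∀ l : J, l ≠ k → {x : B k // π k l x = e l k (π l k (b l))} := by
    intro l h
    exact ⟨Classical.choose (hsurj k l (Ne.symm h) (e l k (π l k (b l)))),
      Classical.choose_spec (hsurj k l (Ne.symm h) (e l k (π l k (b l))))⟩
  set cc : J → B k := fun l => if h : l ≠ k then (c l h).1 else 0 with hcc
  have hc : ∀ l ∈ S, π k l (cc l) = e l k (π l k (b l)) := by
    intro l hl
    have h : l ≠ k := fun h => hk (h ▸ hl)
    simp only [hcc, dif_pos h]
    exact (c l h).2
  have hmem : ∀ l ∈ S, I l ∈ L := by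
    intro l hl
    exact hLmem _ ⟨l, fun h => hk (h ▸ hl), rfl⟩
  have hpair : ∀ l ∈ S, ∀ m ∈ S, cc l - cc m ∈ I l ⊔ I m := by
    intro l hl m hm
    rcases eq_or_ne l m with rfl | hlm
    · simpa using (I l ⊔ I m).zero_mem
    have hlk : l ≠ k := fun h => hk (h ▸ hl)
    have hmk : m ≠ k := fun h => hk (h ▸ hm)
    have hyp1 : π m l (b m) - e l m (π l m (b l)) ∈
        Ideal.map (π m l) (RingHom.ker (π m k)) := by
      rw [hb m hm l hl hlm.symm, sub_self]; exact Ideal.zero_mem _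
    have hyp2 : π k m (cc m) - e m k (π m k (b m)) ∈
        Ideal.map (π k m) (RingHom.ker (π k l)) := by
      rw [hc m hm, sub_self]; exact Ideal.zero_mem _
    have concl := hcoc2 k m l (Ne.symm hmk) (Ne.symm hlk) hlm.symm
      (cc m) (b m) (b l) hyp1 hyp2
    -- concl : π k l (cc m) - e l k (π l k (b l)) ∈ map (π k l) (ker (π k m))
    rw [← hc l hl] at concl
    have : cc m - cc l ∈ Ideal.comap (π k l)
        (Ideal.map (π k l) (RingHom.ker (π k m))) := by
      simpa [Ideal.mem_comap, map_sub] using concl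
    rw [Ideal.comap_map_of_surjective _ (hsurj k l (Ne.symm hlk))] at this
    have : cc l - cc m ∈ RingHom.ker (π k m) ⊔ RingHom.ker (π k l) := by
      simpa using (RingHom.ker (π k m) ⊔ RingHom.ker (π k l)).neg_mem this
    rw [sup_comm] at this
    exact Submodule.mem_sup.2 (by
      obtain ⟨u, hu, v, hv, huv⟩ := Submodule.mem_sup.1 this
      exact ⟨u, hu, v, hv, huv⟩)
  obtain ⟨bk, hbk⟩ := crt L hLdist S I cc hmem hpair
  refine ⟨bk, fun l hl => ?_⟩
  have hlk : l ≠ k := fun h => hk (h ▸ hl)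
  have h1 : π k l bk = e l k (π l k (b l)) := by
    have := hbk l hl
    have h0 : π k l (bk - cc l) = 0 := this
    rw [map_sub, sub_eq_zero] at h0
    rw [h0, hc l hl]
  constructor
  · show π l k (b l) = e k l (π k l bk)
    rw [h1, he l k]
    simp
  · exact h1


/-- a distributive family satisfying the cocycle condition has all
canonical projections from the multi-pullback surjective. -/
theorem stmt0 [Fintype J] (B : J → Type*) [∀ i, CommRing (B i)]
    (C : J → J → Type*) [∀ i j, CommRing (C i j)]
    (π : ∀ i j, B i →+* C i j) (e : ∀ i j, C i j ≃+* C j i)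
    (he : ∀ i j, e j i = (e i j).symm)
    (hdist : DistribFamily B C π)
    (hcoc : CocycleCondition B C π e)
    (i : J) (x : B i) :
    ∃ b : ∀ l, B l, (∀ l m, l ≠ m → Compat B C π e l m (b l) (b m)) ∧ b i = x := by
  classical
  have key : ∀ s : Finset J, ∃ b : ∀ l, B l,
      (∀ l ∈ insert i s, ∀ m ∈ insert i s, l ≠ m → Compat B C π e l m (b l) (b m)) ∧
      b i = x := by
    intro s
    induction s using Finset.induction with
    | empty =>
        refine ⟨Function.update (fun l => (0 : B l)) i x, ?_, Function.update_self _ _ _⟩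
        intro l hl m hm hlm
        simp only [Finset.mem_insert, Finset.notMem_empty, or_false] at hl hm
        exact absurd (hl.trans hm.symm) hlm
    | insert k s hks ih =>
        obtain ⟨b, hb, hbi⟩ := ih
        by_cases hkin : k ∈ insert i s
        · have heq : insert i (insert k s) = insert i s := by
            rw [Finset.insert_comm, Finset.insert_eq_self.2 hkin]
          rw [heq]
          exact ⟨b, hb, hbi⟩
        · obtain ⟨bk, hbk⟩ := extend_step B C π e he hdist hcoc.2 (insert i s) k hkin b hb
          have hne : ∀ a ∈ insert i s, a ≠ k := fun a ha h => hkin (h ▸ ha)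
          refine ⟨Function.update b k bk, ?_, ?_⟩
          · intro l hl m hm hlm
            have hl' : l = k ∨ l ∈ insert i s := by
              rw [Finset.insert_comm] at hl
              simpa using hl
            have hm' : m = k ∨ m ∈ insert i s := by
              rw [Finset.insert_comm] at hm
              simpa using hm
            rcases hl' with rfl | hl''
            · rcases hm' with rfl | hm''
              · exact absurd rfl hlm
              · rw [Function.update_self, Function.update_of_ne (hne m hm'')]
                exact (hbk m hm'').2
            · rcases hm' with rfl | hm''
              · rw [Function.update_self, Function.update_of_ne (hne l hl'')]
                exact (hbk l hl'').1
              · rw [Function.update_of_ne (hne l hl''),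
                  Function.update_of_ne (hne m hm'')]
                exact hb l hl'' m hm'' hlm
          · rw [Function.update_of_ne (hne i (Finset.mem_insert_self i s)), hbi]
  obtain ⟨b, hb, hbi⟩ := key Finset.univ
  exact ⟨b, fun l m hlm => hb l (Finset.mem_insert_of_mem (Finset.mem_univ l))
    m (Finset.mem_insert_of_mem (Finset.mem_univ m)) hlm, hbi⟩
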